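/- Let ν be a valuation on K[x], let Q ∈ K[x] be an (abstract) key polynomial for ν, and let f ∈ K[x] be a non-constant polynomial with ε(f) < ε(Q). Then the initial term of f is a unit in the graded algebra of ν; concretely, there exists b ∈ K[x] with deg b < deg Q such that b·f ∼_ν 1. -/

import Mathlib

open Polynomial

namespace KeyPolPaper

variable {K : Type*} [Field K] {Λ : Type*} [AddCommGroup Λ] [LinearOrder Λ] [IsOrderedAddMonoid Λ]

/-- A valuation on `F[X]` with values in `Λ ∪ {∞}`: multiplicative, satisfies the
ultrametric inequality, and is finite on nonzero constants. -/
def IsValuation {F : Type*} [Field F] (w : F[X] → WithTop Λ) : Prop :=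
  w 0 = ⊤ ∧ (∀ f g : F[X], w (f * g) = w f + w g) ∧
    (∀ f g : F[X], min (w f) (w g) ≤ w (f + g)) ∧
    ∀ a : F, a ≠ 0 → w (C a) ≠ ⊤

/-- `μ ≤ ν` for valuations on `K[X]`. -/
def ValLE (μ ν : K[X] → WithTop Λ) : Prop := ∀ f : K[X], μ f ≤ ν f

/-- `μ < ν` for valuations on `K[X]`. -/
def ValLT (μ ν : K[X] → WithTop Λ) : Prop := ValLE μ ν ∧ μ ≠ ν

/-- ν-equivalence: `f ∼_ν g` iff `ν (f - g) > ν f`. -/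
def VEquiv (ν : K[X] → WithTop Λ) (f g : K[X]) : Prop := ν f < ν (f - g)

/-- ν-divisibility: `h ∣_ν g` iff `g ∼_ν q * h` for some `q`. -/
def VDvd (ν : K[X] → WithTop Λ) (h g : K[X]) : Prop := ∃ q : K[X], VEquiv ν g (q * h)

/-- MacLane–Vaquié key polynomial: monic, ν-minimal and ν-irreducible. -/
def IsMLVKey (ν : K[X] → WithTop Λ) (φ : K[X]) : Prop :=
  φ.Monic ∧ (∀ f : K[X], f ≠ 0 → f.natDegree < φ.natDegree → ¬ VDvd ν φ f) ∧
    ¬ VDvd ν φ 1 ∧ ∀ f g : K[X], VDvd ν φ (f * g) → VDvd ν φ f ∨ VDvd ν φ g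

/-- `e` is the value `ε(f) = max_{b ≥ 1} (ν f - ν (∂_b f)) / b`; phrased multiplicatively,
`e` satisfies `ν f ≤ ν (∂_b f) + b • e` for all `b ≥ 1`, with equality for some `b ≥ 1`.
If `ν f = ∞` then `ε(f) = ∞`. -/
def IsEps (ν : K[X] → WithTop Λ) (f : K[X]) (e : WithTop Λ) : Prop :=
  (ν f = ⊤ ∧ e = ⊤) ∨
    (ν f ≠ ⊤ ∧ (∀ b : ℕ, 1 ≤ b → ν f ≤ ν (hasseDeriv b f) + b • e) ∧
      ∃ b : ℕ, 1 ≤ b ∧ ν f = ν (hasseDeriv b f) + b • e)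

/-- The invariant `ε(f)`; well defined (for non-constant `f`) since `Λ` is divisible and
the defining property determines `e` uniquely. -/
noncomputable def eps (ν : K[X] → WithTop Λ) (f : K[X]) : WithTop Λ :=
  letI := Classical.propDecidable (∃ e : WithTop Λ, IsEps ν f e)
  if h : ∃ e : WithTop Λ, IsEps ν f e then h.choose else ⊤

/-- The set `I(f)` of indices `b ≥ 1` with `ν (∂_b f) = ν f - b • ε(f)`. -/
def epsAttain (ν : K[X] → WithTop Λ) (f : K[X]) : Set ℕ :=
  {b : ℕ | 1 ≤ b ∧ ν f = ν (hasseDeriv b f) + b • eps ν f}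

/-- Abstract key polynomial for `ν`. -/
def IsKeyPoly (ν : K[X] → WithTop Λ) (Q : K[X]) : Prop :=
  Q.Monic ∧ 0 < Q.natDegree ∧
    ∀ f : K[X], 0 < f.natDegree → f.natDegree < Q.natDegree → eps ν f < eps ν Q

/-- The `s`-th coefficient of the canonical `Q`-expansion `f = Σ_s a_s Q^s`,
`deg a_s < deg Q`. -/
noncomputable def qCoeff (Q f : K[X]) (s : ℕ) : K[X] := ((· /ₘ Q)^[s] f) %ₘ Q

/-- The truncation `ν_Q (f) = min_s ν (a_s Q^s)`. -/
noncomputable def trunc (ν : K[X] → WithTop Λ) (Q f : K[X]) : WithTop Λ :=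
  (Finset.range (f.natDegree + 1)).inf fun s => ν (qCoeff Q f s * Q ^ s)

/-- `S_{ν,Q}(f)`: the set of indices attaining the minimum in `ν_Q(f)`. -/
def attain (ν : K[X] → WithTop Λ) (Q f : K[X]) : Set ℕ :=
  {s : ℕ | ν (qCoeff Q f s * Q ^ s) = trunc ν Q f}

/-- The augmented valuation `[μ; φ, γ] (f) = min_s (μ (a_s) + s • γ)` on φ-expansions. -/
noncomputable def augVal (μ : K[X] → WithTop Λ) (φ : K[X]) (γ : WithTop Λ) (f : K[X]) :
    WithTop Λ :=
  (Finset.range (f.natDegree + 1)).inf fun s => μ (qCoeff φ f s) + s • γ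

/-- `Φ_{μ,ν}`: monic polynomials of minimal degree with `μ φ < ν φ`. -/
def PhiSet (μ ν : K[X] → WithTop Λ) : Set K[X] :=
  {φ : K[X] | φ.Monic ∧ μ φ < ν φ ∧
    ∀ ψ : K[X], ψ.Monic → μ ψ < ν ψ → φ.natDegree ≤ ψ.natDegree}

/-- `mult f`: the least `b ≥ 1` with `∂_b f ≠ 0`. -/
noncomputable def multOf (f : K[X]) : ℕ := sInf {b : ℕ | 1 ≤ b ∧ hasseDeriv b f ≠ 0}

/-- Abstract limit key polynomial for `ν` (conditions (K1)-(K4)). -/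
def IsLimitKeyPoly (ν : K[X] → WithTop Λ) (Q : K[X]) : Prop :=
  Q.Monic ∧
    ∃ Qm : K[X], IsKeyPoly ν Qm ∧ ValLT (trunc ν Qm) ν ∧
      (∃ χ ∈ PhiSet (trunc ν Qm) ν, Qm.natDegree = χ.natDegree) ∧
      (∀ χ ∈ PhiSet (trunc ν Qm) ν, ∃ χ' ∈ PhiSet (trunc ν Qm) ν, ν χ < ν χ') ∧
      (∀ χ ∈ PhiSet (trunc ν Qm) ν, trunc ν χ Q < ν Q) ∧
      ∀ Q' : K[X], Q'.Monic →
        (∀ χ ∈ PhiSet (trunc ν Qm) ν, trunc ν χ Q' < ν Q') → Q.natDegree ≤ Q'.natDegree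

/-- A continuous MacLane chain of stable degree `m`: valuations `ρ_0 < ρ_1 < ⋯`,
monic key polynomials `χ_i` (for `i ≥ 1`) of degree `m`, with
`ρ_i = [ρ_{i-1}; χ_i, β_i]`, `β_i = ρ_i (χ_i) > ρ_{i-1} (χ_i)` and
`χ_{i+1} ∤_{ρ_i} χ_i`. -/
structure MacLaneChain (K : Type*) [Field K] (Λ : Type*) [AddCommGroup Λ] [LinearOrder Λ] [IsOrderedAddMonoid Λ] where
  m : ℕ
  hm : 0 < m
  ρ : ℕ → K[X] → WithTop Λ
  χ : ℕ → K[X]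
  β : ℕ → Λ
  isVal : ∀ i : ℕ, IsValuation (ρ i)
  mono : ∀ i : ℕ, ValLT (ρ i) (ρ (i + 1))
  monicChi : ∀ i : ℕ, (χ (i + 1)).Monic
  degChi : ∀ i : ℕ, (χ (i + 1)).natDegree = m
  keyChi : ∀ i : ℕ, IsMLVKey (ρ i) (χ (i + 1))
  beta_def : ∀ i : ℕ, ρ (i + 1) (χ (i + 1)) = (β (i + 1) : WithTop Λ)
  beta_lt : ∀ i : ℕ, ρ i (χ (i + 1)) < (β (i + 1) : WithTop Λ)
  aug : ∀ i : ℕ, ρ (i + 1) = augVal (ρ i) (χ (i + 1)) (β (i + 1) : WithTop Λ)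
  not_dvd : ∀ i : ℕ, ¬ VDvd (ρ (i + 1)) (χ (i + 2)) (χ (i + 1))

/-- A polynomial is stable w.r.t. the chain if its values `ρ_i f` are eventually constant. -/
def MacLaneChain.Stable (ch : MacLaneChain K Λ) (f : K[X]) : Prop :=
  ∃ i0 : ℕ, ∀ i : ℕ, i0 ≤ i → ch.ρ i f = ch.ρ i0 f

/-- The chain is essential: non-stable polynomials exist and all have degree `> m`. -/
def MacLaneChain.Essential (ch : MacLaneChain K Λ) : Prop :=
  (∃ f : K[X], ¬ ch.Stable f) ∧ ∀ f : K[X], ¬ ch.Stable f → ch.m < f.natDegree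

/-- MLV limit key polynomials of the chain: monic non-stable polynomials of minimal
degree `m_∞`. -/
def MacLaneChain.IsLimKP (ch : MacLaneChain K Λ) (φ : K[X]) : Prop :=
  φ.Monic ∧ ¬ ch.Stable φ ∧ ∀ f : K[X], ¬ ch.Stable f → φ.natDegree ≤ f.natDegree

/-- Convex subgroup of a linearly ordered abelian group. -/
def IsConvexSubgroup (H : AddSubgroup Λ) : Prop :=
  ∀ x y : Λ, 0 < x → x < y → y ∈ H → x ∈ H

/-- The value group of a valuation: the subgroup of `Λ` generated by the finite values. -/
def valueGroup {F : Type*} [Field F] (ρ : F[X] → WithTop Λ) : AddSubgroup Λ :=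
  AddSubgroup.closure {γ : Λ | ∃ f : F[X], ρ f = (γ : WithTop Λ)}


variable [Module ℚ Λ]

set_option linter.unusedSectionVars false
set_option linter.unusedVariables false

section AuxLemmas
open Finset

lemma add_self_eq_zero' {a : Λ} (h : a + a = 0) : a = 0 := by
  rcases lt_trichotomy a 0 with h1 | h1 | h1
  · have h2 := add_lt_add h1 h1
    rw [h, add_zero] at h2
    exact absurd h2 (lt_irrefl 0)
  · exact h1
  · have h2 := add_lt_add h1 h1
    rw [h, add_zero] at h2
    exact absurd h2 (lt_irrefl 0)

section Smul
lemma nsmul_coe (n : ℕ) (a : Λ) : (n • (a : WithTop Λ)) = ((n • a : Λ) : WithTop Λ) := by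
  exact_mod_cast rfl

lemma nsmul_top_of_pos {n : ℕ} (hn : 1 ≤ n) : n • (⊤ : WithTop Λ) = ⊤ := by
  induction n with
  | zero => omega
  | succ k _ => rw [succ_nsmul]; exact add_top _

lemma nsmul_ne_top {n : ℕ} {a : WithTop Λ} (ha : a ≠ ⊤) : n • a ≠ ⊤ := by
  cases a with
  | top => exact absurd rfl ha
  | coe a => rw [nsmul_coe]; exact WithTop.coe_ne_top

lemma nsmul_lt_nsmul_withtop {n : ℕ} (hn : 1 ≤ n) {a b : WithTop Λ} (h : a < b) :
    n • a < n • b := by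
  cases b with
  | top =>
    rw [nsmul_top_of_pos hn]
    rcases WithTop.ne_top_iff_exists.1 h.ne with ⟨a', rfl⟩
    rw [nsmul_coe]; exact WithTop.coe_lt_top _
  | coe b =>
    rcases WithTop.ne_top_iff_exists.1 (h.trans (WithTop.coe_lt_top b)).ne with ⟨a', rfl⟩
    rw [nsmul_coe, nsmul_coe]
    exact_mod_cast nsmul_lt_nsmul_right (by omega) (WithTop.coe_lt_coe.1 h)

lemma le_of_nsmul_le_nsmul {n : ℕ} (hn : 1 ≤ n) {a b : WithTop Λ} (h : n • a ≤ n • b) :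
    a ≤ b := by
  by_contra hab
  exact absurd h (not_le.2 (nsmul_lt_nsmul_withtop hn (not_le.1 hab)))
end Smul

section ValBasic
variable {ν : K[X] → WithTop Λ} (hν : IsValuation ν)
include hν

lemma v_zero : ν 0 = ⊤ := hν.1
lemma v_mul (f g : K[X]) : ν (f * g) = ν f + ν g := hν.2.1 f g
lemma v_min_le (f g : K[X]) : min (ν f) (ν g) ≤ ν (f + g) := hν.2.2.1 f g
lemma v_C_ne_top {a : K} (ha : a ≠ 0) : ν (C a) ≠ ⊤ := hν.2.2.2 a ha

lemma v_one : ν 1 = 0 := by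
  have h1 : ν 1 ≠ ⊤ := by simpa using v_C_ne_top hν (one_ne_zero (α := K))
  have h2 := v_mul hν 1 1
  rw [mul_one] at h2
  rcases WithTop.ne_top_iff_exists.1 h1 with ⟨a, ha⟩
  rw [← ha] at h2 ⊢
  rw [← WithTop.coe_add, WithTop.coe_eq_coe] at h2
  have h3 : a + a = a + 0 := by rw [add_zero]; exact h2.symm
  rw [add_left_cancel h3]
  simp

lemma v_neg (f : K[X]) : ν (-f) = ν f := by
  have hm : ν (-f) = ν (C (-1)) + ν f := by
    rw [← v_mul hν]; congr 1
    simp [C_neg]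
  have h1 : ν (C (-1)) = 0 := by
    have hsq : ν (C (-1)) + ν (C (-1)) = 0 := by
      rw [← v_mul hν, ← C_mul]
      norm_num
      exact v_one hν
    have hne : ν (C (-1)) ≠ ⊤ := v_C_ne_top hν (by norm_num)
    rcases WithTop.ne_top_iff_exists.1 hne with ⟨a, ha⟩
    rw [← ha] at hsq ⊢
    rw [← WithTop.coe_add, ← WithTop.coe_zero, WithTop.coe_eq_coe] at hsq
    rw [← WithTop.coe_zero, WithTop.coe_eq_coe]
    exact add_self_eq_zero' hsq
  rw [hm, h1, zero_add]

lemma v_sub_comm (f g : K[X]) : ν (f - g) = ν (g - f) := by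
  rw [← v_neg hν (f - g), neg_sub]

lemma v_add_eq_left {f g : K[X]} (h : ν f < ν g) : ν (f + g) = ν f := by
  have h1 : ν f ≤ ν (f + g) := le_trans (by simp [min_eq_left h.le]) (v_min_le hν f g)
  refine le_antisymm ?_ h1
  by_contra hgt
  push_neg at hgt
  have h3 := v_min_le hν (f + g) (-g)
  rw [show f + g + -g = f by ring, v_neg hν] at h3
  exact absurd h3 (not_le.2 (lt_min hgt h))

lemma v_add_eq_right {f g : K[X]} (h : ν g < ν f) : ν (f + g) = ν g := by
  rw [add_comm]; exact v_add_eq_left hν h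

lemma v_sum_ge {ι : Type*} (t : Finset ι) (h : ι → K[X]) :
    (t.inf fun i => ν (h i)) ≤ ν (∑ i ∈ t, h i) := by
  classical
  induction t using Finset.cons_induction with
  | empty => simp [v_zero hν]
  | cons a t ha ih =>
    rw [Finset.sum_cons, Finset.inf_cons]
    exact le_trans (min_le_min (le_refl _) ih) (v_min_le hν _ _)

lemma v_sum_eq {ι : Type*} {t : Finset ι} {h : ι → K[X]} {i₀ : ι} (hi₀ : i₀ ∈ t)
    (hlt : ∀ i ∈ t, i ≠ i₀ → ν (h i₀) < ν (h i)) :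
    ν (∑ i ∈ t, h i) = ν (h i₀) := by
  classical
  by_cases htop : ν (h i₀) = ⊤
  · have huniq : ∀ i ∈ t, i = i₀ := by
      intro i hi
      by_contra hne
      exact absurd (hlt i hi hne) (by simp [htop])
    have ht : t = {i₀} := Finset.eq_singleton_iff_unique_mem.2 ⟨hi₀, huniq⟩
    rw [ht, Finset.sum_singleton]
  · have hsplit : ∑ i ∈ t, h i = h i₀ + ∑ i ∈ t.erase i₀, h i := by
      rw [Finset.add_sum_erase _ _ hi₀]
    rw [hsplit]
    refine v_add_eq_left hν ?_
    refine lt_of_lt_of_le ?_ (v_sum_ge hν _ _)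
    rw [Finset.lt_inf_iff (lt_top_iff_ne_top.2 htop)]
    intro i hi
    exact hlt i (Finset.mem_of_mem_erase hi) (Finset.ne_of_mem_erase hi)

lemma vequiv_one {f : K[X]} (h : VEquiv ν f 1) : ν f = 0 ∧ 0 < ν (f - 1) := by
  have h1 : ν f < ν (f - 1) := h
  have hle : ν f ≤ 0 := by
    have h2 := v_min_le hν f (1 - f)
    rw [show f + (1 - f) = 1 by ring, v_one hν] at h2
    rw [v_sub_comm hν] at h2
    rwa [min_eq_left h1.le] at h2
  have hge : ¬ ν f < 0 := by
    intro hlt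
    have h2 := v_min_le hν 1 (f - 1)
    rw [show (1 : K[X]) + (f - 1) = f by ring, v_one hν] at h2
    exact absurd h2 (not_le.2 (lt_min hlt h1))
  have hf : ν f = 0 := le_antisymm hle (not_lt.1 hge)
  exact ⟨hf, hf ▸ h1⟩

end ValBasic

section Eps
variable {ν : K[X] → WithTop Λ}

lemma hasseDeriv_natDegree_eq_C (f : K[X]) :
    hasseDeriv f.natDegree f = C (f.coeff f.natDegree) := by
  ext n
  rw [hasseDeriv_coeff, coeff_C]
  rcases Nat.eq_zero_or_pos n with rfl | hn
  · simp
  · rw [if_neg (by omega), coeff_eq_zero_of_natDegree_lt (by omega)]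
    ring

lemma exists_isEps (hν : IsValuation ν) {f : K[X]} (hd : 0 < f.natDegree) (hft : ν f ≠ ⊤) :
    ∃ e : WithTop Λ, IsEps ν f e := by
  classical
  obtain ⟨vf, hvf⟩ := WithTop.ne_top_iff_exists.1 hft
  set d := f.natDegree with hdd
  set B : Finset ℕ := (Finset.range (d + 1)).filter
    (fun b => 1 ≤ b ∧ ν (hasseDeriv b f) ≠ ⊤) with hB
  have hdB : d ∈ B := by
    refine Finset.mem_filter.2 ⟨Finset.mem_range.2 (by omega), by omega, ?_⟩
    rw [hasseDeriv_natDegree_eq_C]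
    refine v_C_ne_top hν ?_
    have hf0 : f ≠ 0 := ne_zero_of_natDegree_gt hd
    exact leadingCoeff_ne_zero.2 hf0
  have hBne : B.Nonempty := ⟨d, hdB⟩
  set lam : ℕ → Λ := fun b => (b : ℚ)⁻¹ • (vf - WithTop.untopD 0 (ν (hasseDeriv b f))) with hlam
  set e : Λ := B.sup' hBne lam with he
  have hkey : ∀ b ∈ B, ν (hasseDeriv b f) + b • ((lam b : Λ) : WithTop Λ) = ν f := by
    intro b hb
    obtain ⟨-, hb1, hbt⟩ := Finset.mem_filter.1 hb
    obtain ⟨wb, hwb⟩ := WithTop.ne_top_iff_exists.1 hbt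
    have huntop : WithTop.untopD 0 (ν (hasseDeriv b f)) = wb := by rw [← hwb]; rfl
    have hsmul : b • lam b = vf - wb := by
      rw [hlam]
      simp only [huntop]
      rw [← Nat.cast_smul_eq_nsmul ℚ, smul_smul, mul_inv_cancel₀ (by exact_mod_cast by omega), one_smul]
    rw [nsmul_coe, hsmul, ← hwb, ← WithTop.coe_add, ← hvf]
    congr 1
    abel
  refine ⟨(e : WithTop Λ), Or.inr ⟨hft, ?_, ?_⟩⟩
  · intro b hb1
    by_cases hbt : ν (hasseDeriv b f) = ⊤
    · rw [hbt, top_add]; exact le_top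
    · have hbB : b ∈ B := by
        refine Finset.mem_filter.2 ⟨Finset.mem_range.2 ?_, hb1, hbt⟩
        by_contra hgt
        rw [hasseDeriv_eq_zero_of_lt_natDegree f b (by omega), v_zero hν] at hbt
        exact hbt rfl
      calc ν f = ν (hasseDeriv b f) + b • ((lam b : Λ) : WithTop Λ) := (hkey b hbB).symm
        _ ≤ ν (hasseDeriv b f) + b • (e : WithTop Λ) := by
            refine add_le_add_right ?_ _
            refine nsmul_le_nsmul_right ?_ b
            exact_mod_cast Finset.le_sup' lam hbB
  · obtain ⟨b, hbB, hbe⟩ := Finset.exists_mem_eq_sup' hBne lam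
    obtain ⟨-, hb1, -⟩ := Finset.mem_filter.1 hbB
    refine ⟨b, hb1, ?_⟩
    rw [he, hbe, hkey b hbB]

lemma isEps_eps {f : K[X]} (h : ∃ e : WithTop Λ, IsEps ν f e) : IsEps ν f (eps ν f) := by
  unfold eps
  split
  · next h' => exact h'.choose_spec
  · next h' => exact absurd h h'

lemma eps_eq_top_of_v_top {f : K[X]} (hft : ν f = ⊤) : eps ν f = ⊤ := by
  unfold eps
  split
  · next h' =>
    rcases h'.choose_spec with ⟨-, h2⟩ | ⟨h1, -⟩
    · exact h2
    · exact absurd hft h1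
  · rfl

lemma v_ne_top_of_eps_lt {f g : K[X]} (h : eps ν f < eps ν g) : ν f ≠ ⊤ := by
  intro hft
  rw [eps_eq_top_of_v_top hft] at h
  exact absurd h not_top_lt

lemma epsE1 (hν : IsValuation ν) {f : K[X]} (hd : 0 < f.natDegree) (hft : ν f ≠ ⊤) :
    ∀ b : ℕ, 1 ≤ b → ν f ≤ ν (hasseDeriv b f) + b • eps ν f := by
  rcases isEps_eps (exists_isEps hν hd hft) with ⟨h1, -⟩ | ⟨-, h2, -⟩
  · exact absurd h1 hft
  · exact h2

lemma epsE2 (hν : IsValuation ν) {f : K[X]} (hd : 0 < f.natDegree) (hft : ν f ≠ ⊤) :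
    ∃ b : ℕ, 1 ≤ b ∧ ν f = ν (hasseDeriv b f) + b • eps ν f := by
  rcases isEps_eps (exists_isEps hν hd hft) with ⟨h1, -⟩ | ⟨-, -, h3⟩
  · exact absurd h1 hft
  · exact h3

lemma eps_ne_top (hν : IsValuation ν) {f : K[X]} (hd : 0 < f.natDegree) (hft : ν f ≠ ⊤) :
    eps ν f ≠ ⊤ := by
  obtain ⟨b, hb1, hb⟩ := epsE2 hν hd hft
  intro htop
  rw [htop, nsmul_top_of_pos hb1, add_top] at hb
  exact hft hb

end Eps

section E1FormSec
variable {ν : K[X] → WithTop Λ}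

/-- The "E1-form" bound: `ν u ≤ ν (∂_k u) + k • E` for all `k ≥ 1`. -/
def E1F (ν : K[X] → WithTop Λ) (u : K[X]) (E : WithTop Λ) : Prop :=
  ∀ k : ℕ, 1 ≤ k → ν u ≤ ν (hasseDeriv k u) + k • E

lemma E1F_of_natDegree_eq_zero (hν : IsValuation ν) {u : K[X]} (h : u.natDegree = 0)
    (E : WithTop Λ) : E1F ν u E := by
  intro k hk
  rw [hasseDeriv_eq_zero_of_lt_natDegree u k (by omega), v_zero hν, top_add]
  exact le_top

lemma E1F.mono {u : K[X]} {E E' : WithTop Λ} (h : E1F ν u E) (hEE : E ≤ E') : E1F ν u E' := by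
  intro k hk
  exact le_trans (h k hk) (add_le_add_right (nsmul_le_nsmul_right hEE k) _)

lemma E1F_of_eps (hν : IsValuation ν) {u : K[X]} (hd : 0 < u.natDegree) (hft : ν u ≠ ⊤) :
    E1F ν u (eps ν u) := epsE1 hν hd hft

lemma E1F_term (hν : IsValuation ν) {u : K[X]} {E : WithTop Λ} (hu : E1F ν u E) (i : ℕ) :
    ν u ≤ ν (hasseDeriv i u) + i • E := by
  rcases Nat.eq_zero_or_pos i with rfl | hi
  · rw [hasseDeriv_zero', zero_nsmul, add_zero]
  · exact hu i hi

lemma E1F.mul (hν : IsValuation ν) {u v : K[X]} {E : WithTop Λ}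
    (hu : E1F ν u E) (hv : E1F ν v E) : E1F ν (u * v) E := by
  intro k hk
  rw [v_mul hν, hasseDeriv_mul]
  have hterm : ∀ ij ∈ Finset.HasAntidiagonal.antidiagonal k,
      ν u + ν v ≤ ν (hasseDeriv ij.1 u * hasseDeriv ij.2 v) + k • E := by
    rintro ⟨i, j⟩ hij
    rw [Finset.HasAntidiagonal.mem_antidiagonal] at hij
    rw [v_mul hν, ← hij, add_nsmul]
    calc ν u + ν v ≤ (ν (hasseDeriv i u) + i • E) + (ν (hasseDeriv j v) + j • E) :=
          add_le_add (E1F_term hν hu i) (E1F_term hν hv j)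
      _ = ν (hasseDeriv i u) + ν (hasseDeriv j v) + (i • E + j • E) := by
          rw [add_add_add_comm]
  obtain ⟨ij, hij, hinf⟩ := Finset.exists_mem_eq_inf (Finset.HasAntidiagonal.antidiagonal k)
    ⟨(0, k), by simp⟩
    (fun ij => ν (hasseDeriv ij.1 u * hasseDeriv ij.2 v))
  calc ν u + ν v ≤ ν (hasseDeriv ij.1 u * hasseDeriv ij.2 v) + k • E := hterm ij hij
    _ ≤ ν (∑ ij ∈ Finset.HasAntidiagonal.antidiagonal k, hasseDeriv ij.1 u * hasseDeriv ij.2 v) + k • E := by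
        refine add_le_add_left ?_ _
        rw [← hinf]
        exact v_sum_ge hν _ _

lemma E1F.pow (hν : IsValuation ν) {u : K[X]} {E : WithTop Λ} (hu : E1F ν u E) (s : ℕ) :
    E1F ν (u ^ s) E := by
  induction s with
  | zero => exact E1F_of_natDegree_eq_zero hν (by simp) E
  | succ t ih => rw [pow_succ]; exact E1F.mul hν ih hu

lemma E1F.neg (hν : IsValuation ν) {u : K[X]} {E : WithTop Λ} (hu : E1F ν u E) :
    E1F ν (-u) E := by
  intro k hk
  rw [v_neg hν, map_neg, v_neg hν]
  exact hu k hk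

lemma eps_le_of_E1F (hν : IsValuation ν) {u : K[X]} {E : WithTop Λ} (hd : 0 < u.natDegree)
    (hft : ν u ≠ ⊤) (h : E1F ν u E) : eps ν u ≤ E := by
  obtain ⟨b, hb1, hb⟩ := epsE2 hν hd hft
  have h2 := h b hb1
  rw [hb] at h2
  have hnt : ν (hasseDeriv b u) ≠ ⊤ := by
    intro ht; rw [ht, top_add] at hb; exact hft hb
  have h3 : b • eps ν u ≤ b • E := by
    rcases WithTop.ne_top_iff_exists.1 hnt with ⟨a, ha⟩
    rw [← ha] at h2
    exact (WithTop.add_le_add_iff_left WithTop.coe_ne_top).1 h2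
  exact le_of_nsmul_le_nsmul hb1 h3

end E1FormSec

section KeySec
variable {ν : K[X] → WithTop Λ} {Q : K[X]}

lemma key_eps_lt (hQ : IsKeyPoly ν Q) {u : K[X]} (hd : 0 < u.natDegree)
    (hdu : u.natDegree < Q.natDegree) : eps ν u < eps ν Q := hQ.2.2 u hd hdu

lemma v_ne_top_small (hν : IsValuation ν) (hQ : IsKeyPoly ν Q) {u : K[X]} (hu : u ≠ 0)
    (hdu : u.natDegree < Q.natDegree) : ν u ≠ ⊤ := by
  rcases Nat.eq_zero_or_pos u.natDegree with h0 | h0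
  · rw [eq_C_of_natDegree_eq_zero h0]
    refine v_C_ne_top hν ?_
    intro hc
    exact hu (by rw [eq_C_of_natDegree_eq_zero h0, hc, C_0])
  · exact v_ne_top_of_eps_lt (key_eps_lt hQ h0 hdu)

lemma E1F_small (hν : IsValuation ν) (hQ : IsKeyPoly ν Q) {u : K[X]}
    (hdu : u.natDegree < Q.natDegree) {E : WithTop Λ} (hE : 0 < u.natDegree → eps ν u ≤ E) :
    E1F ν u E := by
  rcases Nat.eq_zero_or_pos u.natDegree with h0 | h0
  · exact E1F_of_natDegree_eq_zero hν h0 E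
  · have hu : u ≠ 0 := ne_zero_of_natDegree_gt h0
    exact (E1F_of_eps hν h0 (v_ne_top_small hν hQ hu hdu)).mono (hE h0)

end KeySec

section HardA
variable {ν : K[X] → WithTop Λ}

lemma add_lt_add_of_lt_of_le' {a b c d : WithTop Λ} (h1 : a < b) (h2 : c ≤ d) (hc : c ≠ ⊤) :
    a + c < b + d :=
  lt_of_lt_of_le (WithTop.add_lt_add_right hc h1) (add_le_add_right h2 b)

lemma add_lt_add_of_le_of_lt' {a b c d : WithTop Λ} (h1 : a ≤ b) (hb : b ≠ ⊤) (h2 : c < d) :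
    a + c < b + d :=
  lt_of_le_of_lt (add_le_add_left h1 c) (WithTop.add_lt_add_left hb h2)

lemma exists_maxI (hν : IsValuation ν) {u : K[X]} (hd : 0 < u.natDegree) (hft : ν u ≠ ⊤) :
    ∃ b : ℕ, 1 ≤ b ∧ ν u = ν (hasseDeriv b u) + b • eps ν u ∧
      ∀ i, b < i → 1 ≤ i → ν u < ν (hasseDeriv i u) + i • eps ν u := by
  classical
  obtain ⟨b₀, hb₀1, hb₀⟩ := epsE2 hν hd hft
  set P : ℕ → Prop := fun l => 1 ≤ l ∧ ν u = ν (hasseDeriv l u) + l • eps ν u with hP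
  have hb₀d : b₀ ≤ u.natDegree := by
    by_contra h
    rw [hasseDeriv_eq_zero_of_lt_natDegree u b₀ (by omega), v_zero hν, top_add] at hb₀
    exact hft hb₀
  letI : DecidablePred P := Classical.decPred P
  set b := Nat.findGreatest P u.natDegree with hb
  have hPb : P b := Nat.findGreatest_spec hb₀d ⟨hb₀1, hb₀⟩
  refine ⟨b, hPb.1, hPb.2, ?_⟩
  intro i hbi hi1
  have hne : ¬ P i := by
    rcases le_or_gt i u.natDegree with hle | hgt
    · exact Nat.findGreatest_is_greatest hbi hle
    · intro hPi
      obtain ⟨-, hPi2⟩ := hPi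
      rw [hasseDeriv_eq_zero_of_lt_natDegree u i hgt, v_zero hν, top_add] at hPi2
      exact hft hPi2
  exact lt_of_le_of_ne (epsE1 hν hd hft i hi1) (fun he => hne ⟨hi1, he⟩)

lemma HA_core (hν : IsValuation ν) {u v : K[X]} (hdu : 0 < u.natDegree) (hdv : 0 < v.natDegree)
    (hftu : ν u ≠ ⊤) (hftv : ν v ≠ ⊤) (hvu : eps ν v ≤ eps ν u) :
    ∃ k : ℕ, 1 ≤ k ∧ ν (hasseDeriv k (u * v)) + k • eps ν u = ν u + ν v := by
  obtain ⟨b, hb1, hbeq, hbmax⟩ := exists_maxI hν hdu hftu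
  have hεt : eps ν u ≠ ⊤ := eps_ne_top hν hdu hftu
  have hεvt : eps ν v ≠ ⊤ := eps_ne_top hν hdv hftv
  have hE1u : ∀ i : ℕ, ν u ≤ ν (hasseDeriv i u) + i • eps ν u :=
    fun i => E1F_term hν (E1F_of_eps hν hdu hftu) i
  have hE1v : ∀ j : ℕ, ν v ≤ ν (hasseDeriv j v) + j • eps ν v :=
    fun j => E1F_term hν (E1F_of_eps hν hdv hftv) j
  have hWt : ν u + ν v ≠ ⊤ := WithTop.add_ne_top.2 ⟨hftu, hftv⟩
  rcases eq_or_lt_of_le hvu with heq | hlt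
  · -- equal eps case : k = b + c
    obtain ⟨c, hc1, hceq, hcmax⟩ := exists_maxI hν hdv hftv
    rw [heq] at hceq hcmax
    have hE1v' : ∀ j : ℕ, ν v ≤ ν (hasseDeriv j v) + j • eps ν u := by
      intro j; rw [← heq]; exact hE1v j
    refine ⟨b + c, by omega, ?_⟩
    have htarget : (ν (hasseDeriv b u) + ν (hasseDeriv c v)) + (b + c) • eps ν u
        = ν u + ν v := by
      rw [add_nsmul, add_add_add_comm, ← hbeq, ← hceq]
    have hmain : ∀ ij ∈ Finset.HasAntidiagonal.antidiagonal (b + c), ij ≠ ((b, c) : ℕ × ℕ) →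
        ν (hasseDeriv (b, c).1 u * hasseDeriv (b, c).2 v) <
          ν (hasseDeriv ij.1 u * hasseDeriv ij.2 v) := by
      rintro ⟨i, j⟩ hij hne
      rw [Finset.HasAntidiagonal.mem_antidiagonal] at hij
      rw [v_mul hν, v_mul hν]
      have hgoal : ν u + ν v <
          (ν (hasseDeriv i u) + ν (hasseDeriv j v)) + (b + c) • eps ν u := by
        by_cases hitop : ν (hasseDeriv i u) = ⊤
        · rw [hitop, top_add, top_add]; exact lt_top_iff_ne_top.2 hWt
        by_cases hjtop : ν (hasseDeriv j v) = ⊤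
        · rw [hjtop, add_top, top_add]; exact lt_top_iff_ne_top.2 hWt
        have harr : (ν (hasseDeriv i u) + i • eps ν u) + (ν (hasseDeriv j v) + j • eps ν u)
            = (ν (hasseDeriv i u) + ν (hasseDeriv j v)) + (b + c) • eps ν u := by
          rw [add_add_add_comm, ← add_nsmul, hij]
        rw [← harr]
        have hij2 : b < i ∨ c < j := by
          by_contra hcon
          push_neg at hcon
          apply hne
          have : i = b ∧ j = c := by omega
          simp [this.1, this.2]
        rcases hij2 with hbi | hcj
        · exact add_lt_add_of_lt_of_le' (hbmax i hbi (by omega)) (hE1v' j) hftv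
        · refine add_lt_add_of_le_of_lt' (hE1u i)
            (WithTop.add_ne_top.2 ⟨hitop, nsmul_ne_top hεt⟩) (hcmax j hcj (by omega))
      rw [← htarget] at hgoal
      exact (WithTop.add_lt_add_iff_right (nsmul_ne_top (n := b + c) hεt)).1 hgoal
    rw [hasseDeriv_mul, v_sum_eq hν (by simp : ((b, c) : ℕ × ℕ) ∈ Finset.HasAntidiagonal.antidiagonal (b + c)) hmain,
      v_mul hν]
    exact htarget
  · -- strict case : k = b
    refine ⟨b, hb1, ?_⟩
    have htarget : ν (hasseDeriv b u * hasseDeriv 0 v) + b • eps ν u = ν u + ν v := by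
      rw [hasseDeriv_zero', v_mul hν, add_right_comm, ← hbeq]
    have hmain : ∀ ij ∈ Finset.HasAntidiagonal.antidiagonal b, ij ≠ ((b, 0) : ℕ × ℕ) →
        ν (hasseDeriv (b, 0).1 u * hasseDeriv (b, 0).2 v) <
          ν (hasseDeriv ij.1 u * hasseDeriv ij.2 v) := by
      rintro ⟨i, j⟩ hij hne
      rw [Finset.HasAntidiagonal.mem_antidiagonal] at hij
      have hgoal : ν u + ν v <
          (ν (hasseDeriv i u) + ν (hasseDeriv j v)) + b • eps ν u := by
        by_cases hitop : ν (hasseDeriv i u) = ⊤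
        · rw [hitop, top_add, top_add]; exact lt_top_iff_ne_top.2 hWt
        by_cases hjtop : ν (hasseDeriv j v) = ⊤
        · rw [hjtop, add_top, top_add]; exact lt_top_iff_ne_top.2 hWt
        have hj1 : 1 ≤ j := by
          rcases Nat.eq_zero_or_pos j with rfl | h
          · exfalso; apply hne; simp at hij ⊢; omega
          · exact h
        have harr : (ν (hasseDeriv i u) + i • eps ν u) + (ν (hasseDeriv j v) + j • eps ν u)
            = (ν (hasseDeriv i u) + ν (hasseDeriv j v)) + b • eps ν u := by
          rw [add_add_add_comm, ← add_nsmul, hij]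
        rw [← harr]
        have h2 : ν v < ν (hasseDeriv j v) + j • eps ν u :=
          lt_of_le_of_lt (hE1v j)
            (WithTop.add_lt_add_left hjtop (nsmul_lt_nsmul_withtop hj1 hlt))
        exact add_lt_add_of_le_of_lt' (hE1u i)
          (WithTop.add_ne_top.2 ⟨hitop, nsmul_ne_top hεt⟩) h2
      rw [v_mul hν, v_mul hν]
      rw [← htarget, v_mul hν] at hgoal
      exact (WithTop.add_lt_add_iff_right (nsmul_ne_top (n := b) hεt)).1 hgoal
    rw [hasseDeriv_mul, v_sum_eq hν (by simp : ((b, 0) : ℕ × ℕ) ∈ Finset.HasAntidiagonal.antidiagonal b) hmain]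
    exact htarget

lemma HA (hν : IsValuation ν) {u v : K[X]} (hdu : 0 < u.natDegree) (hdv : 0 < v.natDegree)
    (hftu : ν u ≠ ⊤) (hftv : ν v ≠ ⊤) :
    ∃ k : ℕ, 1 ≤ k ∧
      ν (hasseDeriv k (u * v)) + k • max (eps ν u) (eps ν v) = ν u + ν v := by
  rcases le_total (eps ν v) (eps ν u) with h | h
  · rw [max_eq_left h]; exact HA_core hν hdu hdv hftu hftv h
  · rw [max_eq_right h, mul_comm u v, add_comm (ν u) (ν v)]
    exact HA_core hν hdv hdu hftv hftu h

end HardA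
section BprimeSec
variable {ν : K[X] → WithTop Λ} {Q : K[X]}

lemma Bprime (hν : IsValuation ν) (hQ : IsKeyPoly ν Q) {f : K[X]} (hd : 0 < f.natDegree)
    (hft : ν f ≠ ⊤) (hef : eps ν f < eps ν Q) :
    ν (f %ₘ Q) < ν (Q * (f /ₘ Q)) := by
  set q := f /ₘ Q with hq
  set r := f %ₘ Q with hr
  have hQm : Q.Monic := hQ.1
  have hDpos : 0 < Q.natDegree := hQ.2.1
  have hfeq : r + Q * q = f := modByMonic_add_div f Q
  by_contra hcon
  push_neg at hcon
  have hfge : ν (Q * q) ≤ ν f := by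
    rw [← hfeq]
    exact le_trans (by simp [hcon]) (v_min_le hν r (Q * q))
  by_cases hQqt : ν (Q * q) = ⊤
  · rw [hQqt] at hfge
    exact hft (top_le_iff.1 hfge)
  have hQt : ν Q ≠ ⊤ := fun h => hQqt (by rw [v_mul hν, h, top_add])
  have hqt : ν q ≠ ⊤ := fun h => hQqt (by rw [v_mul hν, h, add_top])
  have hM : ∃ (k : ℕ) (M : WithTop Λ), 1 ≤ k ∧ eps ν Q ≤ M ∧ M ≠ ⊤ ∧
      ν (hasseDeriv k (Q * q)) + k • M = ν (Q * q) := by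
    rcases Nat.eq_zero_or_pos q.natDegree with h0 | h0
    · obtain ⟨k, hk1, hkeq⟩ := epsE2 hν hDpos hQt
      refine ⟨k, eps ν Q, hk1, le_refl _, eps_ne_top hν hDpos hQt, ?_⟩
      have hqC : q = C (q.coeff 0) := eq_C_of_natDegree_eq_zero h0
      have hder : hasseDeriv k (Q * q) = hasseDeriv k Q * q := by
        conv_lhs => rw [hqC, mul_comm Q, ← smul_eq_C_mul, map_smul]
        rw [smul_eq_C_mul, mul_comm, ← hqC]
      rw [hder, v_mul hν, v_mul hν, add_right_comm, ← hkeq]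
    · obtain ⟨k, hk1, hkeq⟩ := HA hν hDpos h0 hQt hqt
      have hQet : eps ν Q ≠ ⊤ := eps_ne_top hν hDpos hQt
      have hqet : eps ν q ≠ ⊤ := eps_ne_top hν h0 hqt
      refine ⟨k, max (eps ν Q) (eps ν q), hk1, le_max_left _ _, ?_, by rw [hkeq, ← v_mul hν]⟩
      intro h
      rcases max_choice (eps ν Q) (eps ν q) with h' | h' <;> rw [h'] at h
      · exact hQet h
      · exact hqet h
  obtain ⟨k, M, hk1, hQM, hMt, hkey⟩ := hM
  have hrstep : ν (Q * q) < ν (hasseDeriv k r) + k • M := by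
    by_cases hrt : ν (hasseDeriv k r) = ⊤
    · rw [hrt, top_add]; exact lt_top_iff_ne_top.2 hQqt
    · have hr0 : 0 < r.natDegree := by
        by_contra h
        push_neg at h
        rw [hasseDeriv_eq_zero_of_lt_natDegree r k (by omega), v_zero hν] at hrt
        exact hrt rfl
      have hQne1 : Q ≠ 1 := fun h1 => by rw [h1] at hDpos; simp at hDpos
      have hrd : r.natDegree < Q.natDegree := natDegree_modByMonic_lt f hQm hQne1
      have hrft : ν r ≠ ⊤ := v_ne_top_small hν hQ (ne_zero_of_natDegree_gt hr0) hrd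
      have hre : eps ν r < M := lt_of_lt_of_le (key_eps_lt hQ hr0 hrd) hQM
      calc ν (Q * q) ≤ ν r := hcon
        _ ≤ ν (hasseDeriv k r) + k • eps ν r := epsE1 hν hr0 hrft k hk1
        _ < ν (hasseDeriv k r) + k • M :=
            WithTop.add_lt_add_left hrt (nsmul_lt_nsmul_withtop hk1 hre)
  have hf2 : f = Q * q + r := by rw [← hfeq]; ring
  have hder : hasseDeriv k f = hasseDeriv k (Q * q) + hasseDeriv k r := by
    conv_lhs => rw [hf2, map_add]
  have hlt2 : ν (hasseDeriv k (Q * q)) < ν (hasseDeriv k r) := by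
    rw [← hkey] at hrstep
    exact (WithTop.add_lt_add_iff_right (nsmul_ne_top hMt)).1 hrstep
  have hderv : ν (hasseDeriv k f) = ν (hasseDeriv k (Q * q)) := by
    rw [hder]
    exact v_add_eq_left hν hlt2
  have hfinal : ν f ≤ ν (hasseDeriv k f) + k • eps ν f := epsE1 hν hd hft k hk1
  rw [hderv] at hfinal
  have h1 : ν (hasseDeriv k (Q * q)) + k • M ≤ ν (hasseDeriv k (Q * q)) + k • eps ν f := by
    rw [hkey]
    exact le_trans hfge hfinal
  have hnt : ν (hasseDeriv k (Q * q)) ≠ ⊤ := fun h => hQqt (by rw [← hkey, h, top_add])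
  have h2 : M ≤ eps ν f := by
    refine le_of_nsmul_le_nsmul hk1 ?_
    rcases WithTop.ne_top_iff_exists.1 hnt with ⟨a, ha⟩
    rw [← ha] at h1
    exact (WithTop.add_le_add_iff_left WithTop.coe_ne_top).1 h1
  exact absurd (lt_of_le_of_lt h2 (lt_of_lt_of_le hef hQM)) (lt_irrefl M)

lemma Bfull (hν : IsValuation ν) (hQ : IsKeyPoly ν Q) {f : K[X]} (hd : 0 < f.natDegree)
    (hft : ν f ≠ ⊤) (hef : eps ν f < eps ν Q) :
    ν (f %ₘ Q) = ν f ∧ ν f < ν (f - f %ₘ Q) := by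
  have h := Bprime hν hQ hd hft hef
  have hfeq : f %ₘ Q + Q * (f /ₘ Q) = f := modByMonic_add_div f Q
  have hsub : f - f %ₘ Q = Q * (f /ₘ Q) := by linear_combination -hfeq
  have hvf : ν f = ν (f %ₘ Q) := by
    conv_lhs => rw [← hfeq]
    exact v_add_eq_left hν h
  refine ⟨hvf.symm, ?_⟩
  rw [hsub, hvf]
  exact h

end BprimeSec

section ExpansionSec
variable {ν : K[X] → WithTop Λ}

lemma v_pow_ne_top (hν : IsValuation ν) {g : K[X]} (h : ν g ≠ ⊤) (s : ℕ) : ν (g ^ s) ≠ ⊤ := by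
  induction s with
  | zero => rw [pow_zero, v_one hν]; exact WithTop.zero_ne_top
  | succ t ih =>
    rw [pow_succ, v_mul hν]
    exact WithTop.add_ne_top.2 ⟨ih, h⟩

lemma E1F_bound_small (hν : IsValuation ν) {Q : K[X]} (hQ : IsKeyPoly ν Q) {u g₀ : K[X]}
    (hdu : u.natDegree < Q.natDegree) (hg₀ : 0 < g₀.natDegree) (hg₀d : g₀.natDegree < Q.natDegree) :
    ∃ E : WithTop Λ, E < eps ν Q ∧ E1F ν u E := by
  rcases Nat.eq_zero_or_pos u.natDegree with h0 | h0
  · exact ⟨eps ν g₀, key_eps_lt hQ hg₀ hg₀d, E1F_of_natDegree_eq_zero hν h0 _⟩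
  · refine ⟨eps ν u, key_eps_lt hQ h0 hdu, ?_⟩
    exact E1F_of_eps hν h0 (v_ne_top_small hν hQ (ne_zero_of_natDegree_gt h0) hdu)

lemma exists_expansion {g : K[X]} (hg : g.Monic) (hn : 0 < g.natDegree) (f : K[X]) :
    ∃ (N : ℕ) (c : ℕ → K[X]), 0 < N ∧ f = ∑ s ∈ Finset.range N, c s * g ^ s ∧
      (∀ s, (c s).natDegree < g.natDegree) ∧
      (∀ s, c s ≠ 0 → (c s).natDegree + s * g.natDegree ≤ f.natDegree) := by
  suffices h : ∀ (m : ℕ) (f : K[X]), f.natDegree ≤ m →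
      ∃ (N : ℕ) (c : ℕ → K[X]), 0 < N ∧ f = ∑ s ∈ Finset.range N, c s * g ^ s ∧
        (∀ s, (c s).natDegree < g.natDegree) ∧
        (∀ s, c s ≠ 0 → (c s).natDegree + s * g.natDegree ≤ f.natDegree) by
    exact h f.natDegree f le_rfl
  have hdirect : ∀ f : K[X], f.natDegree < g.natDegree →
      ∃ (N : ℕ) (c : ℕ → K[X]), 0 < N ∧ f = ∑ s ∈ Finset.range N, c s * g ^ s ∧
        (∀ s, (c s).natDegree < g.natDegree) ∧
        (∀ s, c s ≠ 0 → (c s).natDegree + s * g.natDegree ≤ f.natDegree) := by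
    intro f hlt
    refine ⟨1, fun s => match s with | 0 => f | _ + 1 => 0, one_pos, by simp, ?_, ?_⟩
    · intro s
      match s with
      | 0 => exact hlt
      | t + 1 => simpa using hn
    · intro s hcs
      match s with
      | 0 => simp
      | t + 1 => exact absurd rfl hcs
  intro m
  induction m with
  | zero =>
    intro f hf
    exact hdirect f (by omega)
  | succ m ih =>
    intro f hf
    rcases Nat.lt_or_ge f.natDegree g.natDegree with hlt | hge
    · exact hdirect f hlt
    · set q := f /ₘ g with hqdef
      have hqd : q.natDegree = f.natDegree - g.natDegree := natDegree_divByMonic f hg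
      have hqm : q.natDegree ≤ m := by omega
      obtain ⟨N, c, hN, hsum, hdeg, hbound⟩ := ih q hqm
      refine ⟨N + 1, fun s => match s with | 0 => f %ₘ g | t + 1 => c t, by omega, ?_, ?_, ?_⟩
      · rw [Finset.sum_range_succ']
        have hterm : ∀ i ∈ Finset.range N,
            (match i + 1 with | 0 => f %ₘ g | t + 1 => c t) * g ^ (i + 1)
              = g * (c i * g ^ i) := by
          intro i _
          show c i * g ^ (i + 1) = g * (c i * g ^ i)
          ring
        rw [Finset.sum_congr rfl hterm, ← Finset.mul_sum, ← hsum]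
        show f = g * q + (f %ₘ g) * g ^ 0
        rw [pow_zero, mul_one, add_comm, modByMonic_add_div f g]
      · intro s
        match s with
        | 0 => exact natDegree_modByMonic_lt f hg (fun h1 => by rw [h1] at hn; simp at hn)
        | t + 1 => exact hdeg t
      · intro s hcs
        match s with
        | 0 =>
          have := natDegree_modByMonic_lt f hg (fun h1 => by rw [h1] at hn; simp at hn)
          show (f %ₘ g).natDegree + 0 * g.natDegree ≤ f.natDegree
          simp only [Nat.zero_mul, Nat.add_zero]
          omega
        | t + 1 =>
          have h1 := hbound t hcs
          calc (c t).natDegree + (t + 1) * g.natDegree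
              = ((c t).natDegree + t * g.natDegree) + g.natDegree := by ring
            _ ≤ q.natDegree + g.natDegree := add_le_add_left h1 _
            _ ≤ f.natDegree := by omega

end ExpansionSec

section UnitSmall
variable {ν : K[X] → WithTop Λ}

lemma unit_small (hν : IsValuation ν) {Q : K[X]} (hQ : IsKeyPoly ν Q) :
    ∀ (n : ℕ) (r : K[X]), r ≠ 0 → r.natDegree ≤ n → r.natDegree < Q.natDegree →
      ∃ b : K[X], b.natDegree < Q.natDegree ∧ VEquiv ν (b * r) 1 := by
  have hQm := hQ.1
  have hD := hQ.2.1
  have hQne1 : Q ≠ 1 := fun h1 => by rw [h1] at hD; simp at hD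
  have base : ∀ r : K[X], r ≠ 0 → r.natDegree = 0 →
      ∃ b, b.natDegree < Q.natDegree ∧ VEquiv ν (b * r) 1 := by
    intro r hr h0
    have hra : r = C (r.coeff 0) := eq_C_of_natDegree_eq_zero h0
    have ha : r.coeff 0 ≠ 0 := fun h => hr (by rw [hra, h, C_0])
    refine ⟨C (r.coeff 0)⁻¹, by simpa using hD, ?_⟩
    have hone : C (r.coeff 0)⁻¹ * r = 1 := by
      nth_rewrite 2 [hra]
      rw [← C_mul, inv_mul_cancel₀ ha, C_1]
    rw [hone]
    show ν 1 < ν (1 - 1)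
    rw [sub_self, v_zero hν, v_one hν]
    exact lt_top_iff_ne_top.2 WithTop.zero_ne_top
  intro n
  induction n with
  | zero =>
    intro r hr hle hrd
    exact base r hr (by omega)
  | succ n ih =>
    intro r hr hle hrd
    rcases Nat.lt_or_ge r.natDegree 1 with h0 | h1
    · exact base r hr (by omega)
    rcases Nat.lt_or_ge r.natDegree (n + 1) with hlt | hge
    · exact ih r hr (by omega) hrd
    have hu : r.leadingCoeff ≠ 0 := leadingCoeff_ne_zero.2 hr
    set g : K[X] := r * C r.leadingCoeff⁻¹ with hgdef
    have hgm : g.Monic := monic_mul_leadingCoeff_inv hr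
    have hgd : g.natDegree = r.natDegree := natDegree_mul_leadingCoeff_inv r hr
    have hg1 : 0 < g.natDegree := by omega
    have hgD : g.natDegree < Q.natDegree := by omega
    have hg0 : g ≠ 0 := hgm.ne_zero
    have hgt : ν g ≠ ⊤ := v_ne_top_small hν hQ hg0 hgD
    obtain ⟨N, c, hN, hsum, hdegc, hbound⟩ := exists_expansion hgm hg1 Q
    have hNne : (Finset.range N).Nonempty := ⟨0, Finset.mem_range.2 hN⟩
    set w := (Finset.range N).inf (fun s => ν (c s * g ^ s)) with hw
    have hQ0 : Q ≠ 0 := hQm.ne_zero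
    have hcex : ∃ s ∈ Finset.range N, c s ≠ 0 := by
      by_contra hno
      push_neg at hno
      apply hQ0
      rw [hsum]
      exact Finset.sum_eq_zero (fun s hs => by rw [hno s hs, zero_mul])
    have hterm_ne : ∀ s, c s ≠ 0 → ν (c s * g ^ s) ≠ ⊤ := by
      intro s hcs
      rw [v_mul hν]
      exact WithTop.add_ne_top.2
        ⟨v_ne_top_small hν hQ hcs (lt_trans (hdegc s) hgD), v_pow_ne_top hν hgt s⟩
    have hwt : w ≠ ⊤ := by
      obtain ⟨s, hs, hcs⟩ := hcex
      exact ne_top_of_le_ne_top (hterm_ne s hcs) (Finset.inf_le hs)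
    have hQw : w ≤ ν Q := by
      have := v_sum_ge hν (Finset.range N) (fun s => c s * g ^ s)
      rwa [← hsum] at this
    have hQgtw : w < ν Q := by
      rcases lt_or_eq_of_le hQw with h | h
      · exact h
      exfalso
      obtain ⟨Eg, hEg1, hEg2⟩ : ∃ E, E < eps ν Q ∧ E1F ν g E :=
        ⟨eps ν g, key_eps_lt hQ hg1 hgD, E1F_of_eps hν hg1 hgt⟩
      have hEc : ∀ s : ℕ, ∃ E, E < eps ν Q ∧ E1F ν (c s) E := fun s =>
        E1F_bound_small hν hQ (lt_trans (hdegc s) hgD) hg1 hgD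
      choose Ec hEc1 hEc2 using hEc
      set E := max Eg ((Finset.range N).sup' hNne Ec) with hE
      have hElt : E < eps ν Q :=
        max_lt hEg1 ((Finset.sup'_lt_iff hNne).2 (fun s _ => hEc1 s))
      have hterm : ∀ s ∈ Finset.range N, E1F ν (c s * g ^ s) E := by
        intro s hs
        refine E1F.mul hν ((hEc2 s).mono ?_) ((hEg2.mono (le_max_left _ _)).pow hν s)
        exact le_trans (Finset.le_sup' Ec hs) (le_max_right _ _)
      have hQE : E1F ν Q E := by
        intro k hk
        have hdQ : hasseDeriv k Q = ∑ s ∈ Finset.range N, hasseDeriv k (c s * g ^ s) := by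
          conv_lhs => rw [hsum]
          exact map_sum (hasseDeriv k) _ _
        obtain ⟨s1, hs1, hinf⟩ := Finset.exists_mem_eq_inf (Finset.range N) hNne
          (fun s => ν (hasseDeriv k (c s * g ^ s)))
        calc ν Q = w := h.symm
          _ ≤ ν (c s1 * g ^ s1) := Finset.inf_le hs1
          _ ≤ ν (hasseDeriv k (c s1 * g ^ s1)) + k • E := hterm s1 hs1 k hk
          _ ≤ ν (hasseDeriv k Q) + k • E := by
              refine add_le_add_left ?_ _
              rw [hdQ, ← hinf]
              exact v_sum_ge hν _ _
      have hQt' : ν Q ≠ ⊤ := by rw [← h]; exact hwt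
      exact absurd (lt_of_le_of_lt (eps_le_of_E1F hν hD hQt' hQE) hElt) (lt_irrefl _)
    classical
    set T := (Finset.range N).filter (fun s => ν (c s * g ^ s) = w) with hT
    have hTne : T.Nonempty := by
      obtain ⟨s, hs, heqw⟩ := Finset.exists_mem_eq_inf (Finset.range N) hNne
        (fun s => ν (c s * g ^ s))
      exact ⟨s, Finset.mem_filter.2 ⟨hs, heqw.symm⟩⟩
    obtain ⟨s₀, hs₀def⟩ : ∃ s₀, s₀ = T.min' hTne := ⟨_, rfl⟩
    have hs₀T : s₀ ∈ T := by rw [hs₀def]; exact T.min'_mem hTne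
    have hs₀range : s₀ ∈ Finset.range N := (Finset.mem_filter.1 hs₀T).1
    have hs₀N : s₀ < N := Finset.mem_range.1 hs₀range
    have hs₀w : ν (c s₀ * g ^ s₀) = w := (Finset.mem_filter.1 hs₀T).2
    have hmin : ∀ s ∈ Finset.range N, s < s₀ → w < ν (c s * g ^ s) := by
      intro s hs hlt'
      refine lt_of_le_of_ne (Finset.inf_le hs) ?_
      intro he
      have h6 : s₀ ≤ s := by
        rw [hs₀def]
        exact T.min'_le s (Finset.mem_filter.2 ⟨hs, he.symm⟩)
      omega
    set A := (Finset.range N).filter (fun s => s < s₀) with hA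
    set B := (Finset.range N).filter (fun s => s₀ < s) with hB
    set P := ∑ s ∈ A, c s * g ^ s with hP
    set G := ∑ s ∈ B, c s * g ^ (s - (s₀ + 1)) with hG
    have hsplit : Q = P + c s₀ * g ^ s₀ + g ^ (s₀ + 1) * G := by
      have h1' : Q = P + ∑ s ∈ (Finset.range N).filter (fun s => ¬ s < s₀), c s * g ^ s := by
        rw [hsum, hP, hA, Finset.sum_filter_add_sum_filter_not]
      have h2' : (Finset.range N).filter (fun s => ¬ s < s₀) = insert s₀ B := by
        ext s
        simp only [Finset.mem_filter, Finset.mem_range, Finset.mem_insert, hB, not_lt]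
        constructor
        · rintro ⟨h3, h4⟩
          omega
        · intro h3
          rcases h3 with h3 | ⟨h3, h4⟩ <;> omega
      have h3' : s₀ ∉ B := by simp [hB]
      have h4' : ∑ s ∈ insert s₀ B, c s * g ^ s = c s₀ * g ^ s₀ + ∑ s ∈ B, c s * g ^ s :=
        Finset.sum_insert h3'
      have h5' : g ^ (s₀ + 1) * G = ∑ s ∈ B, c s * g ^ s := by
        rw [hG, Finset.mul_sum]
        refine Finset.sum_congr rfl ?_
        intro s hs
        have hs' : s₀ + 1 ≤ s := by
          have hs'' : s₀ < s := (Finset.mem_filter.1 hs).2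
          omega
        calc g ^ (s₀ + 1) * (c s * g ^ (s - (s₀ + 1)))
            = c s * g ^ ((s₀ + 1) + (s - (s₀ + 1))) := by rw [pow_add]; ring
          _ = c s * g ^ s := by rw [Nat.add_sub_cancel' hs']
      rw [h1', h2', h4', h5', add_assoc]
    have hPw : w < ν P := by
      rw [hP]
      refine lt_of_lt_of_le ?_ (v_sum_ge hν A _)
      rw [Finset.lt_inf_iff (lt_top_iff_ne_top.2 hwt)]
      intro s hsA
      obtain ⟨hsr, hslt⟩ := Finset.mem_filter.1 hsA
      exact hmin s hsr hslt
    have hQP : w < ν (Q - P) := by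
      rw [show Q - P = Q + (-P) by ring]
      exact lt_of_lt_of_le (lt_min hQgtw (by rw [v_neg hν]; exact hPw)) (v_min_le hν Q (-P))
    have hX : ν (g ^ (s₀ + 1) * G) = w := by
      rw [show g ^ (s₀ + 1) * G = (Q - P) + (-(c s₀ * g ^ s₀)) by linear_combination -hsplit]
      rw [v_add_eq_right hν (by rw [v_neg hν, hs₀w]; exact hQP)]
      rw [v_neg hν, hs₀w]
    have hGt : ν G ≠ ⊤ := by
      intro hGtop
      rw [v_mul hν, hGtop, add_top] at hX
      exact hwt hX.symm
    have hc0 : c s₀ ≠ 0 := by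
      intro h
      rw [h, zero_mul, v_zero hν] at hs₀w
      exact hwt hs₀w.symm
    have hc0d : (c s₀).natDegree ≤ n := by
      have := hdegc s₀
      omega
    obtain ⟨e, hed, hee⟩ := ih (c s₀) hc0 hc0d (lt_trans (hdegc s₀) hgD)
    obtain ⟨hec0, hec1⟩ := vequiv_one hν hee
    have het : ν e ≠ ⊤ := by
      intro h
      rw [v_mul hν, h, top_add] at hec0
      simp at hec0
    have hec0' : ν e + ν (c s₀) = 0 := by rw [← v_mul hν]; exact hec0
    have hgs₀t : ν (g ^ s₀) ≠ ⊤ := v_pow_ne_top hν hgt s₀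
    have hc₀w : ν (c s₀) + ν (g ^ s₀) = w := by rw [← v_mul hν]; exact hs₀w
    have hident : (e * G * g + 1) * g ^ s₀ = e * (Q - P) - (e * c s₀ - 1) * g ^ s₀ := by
      linear_combination (-e) * hsplit
    have h1' : ν (g ^ s₀) < ν (e * (Q - P)) := by
      rw [v_mul hν]
      have heqw : ν e + w = ν (g ^ s₀) := by
        rw [← hc₀w, ← add_assoc, hec0', zero_add]
      rw [← heqw]
      exact WithTop.add_lt_add_left het hQP
    have h2' : ν (g ^ s₀) < ν ((e * c s₀ - 1) * g ^ s₀) := by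
      rw [v_mul hν]
      calc ν (g ^ s₀) = 0 + ν (g ^ s₀) := (zero_add _).symm
        _ < ν (e * c s₀ - 1) + ν (g ^ s₀) := WithTop.add_lt_add_right hgs₀t hec1
    have h3' : ν (g ^ s₀) < ν ((e * G * g + 1) * g ^ s₀) := by
      rw [hident, show e * (Q - P) - (e * c s₀ - 1) * g ^ s₀
          = e * (Q - P) + (-((e * c s₀ - 1) * g ^ s₀)) by ring]
      refine lt_of_lt_of_le (lt_min h1' ?_) (v_min_le hν _ _)
      rw [v_neg hν]
      exact h2'
    have h4' : 0 < ν (e * G * g + 1) := by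
      rw [v_mul hν] at h3'
      by_contra hcon
      push_neg at hcon
      have h5 : ν (e * G * g + 1) + ν (g ^ s₀) ≤ 0 + ν (g ^ s₀) := add_le_add_left hcon _
      rw [zero_add] at h5
      exact absurd (lt_of_lt_of_le h3' h5) (lt_irrefl _)
    set b₁ := -(e * G) with hb₁def
    have hbg : VEquiv ν (b₁ * g) 1 := by
      show ν (b₁ * g) < ν (b₁ * g - 1)
      rw [show b₁ * g - 1 = -(e * G * g + 1) by rw [hb₁def]; ring, v_neg hν]
      rw [show b₁ * g = -(e * G * g + 1) + 1 by rw [hb₁def]; ring]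
      rw [v_add_eq_right hν (by rw [v_neg hν, v_one hν]; exact h4'), v_one hν]
      exact h4'
    have hwit : ∃ b', b'.natDegree < Q.natDegree ∧ VEquiv ν (b' * g) 1 := by
      rcases Nat.lt_or_ge b₁.natDegree Q.natDegree with hsmall | hbig
      · exact ⟨b₁, hsmall, hbg⟩
      · obtain ⟨hb₁g0, hb₁g1⟩ := vequiv_one hν hbg
        have hb₁t : ν b₁ ≠ ⊤ := by
          intro h
          rw [v_mul hν, h, top_add] at hb₁g0
          simp at hb₁g0
        have hb₁0 : 0 < b₁.natDegree := by omega
        have hGd : G.natDegree < Q.natDegree := by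
          rw [hG]
          refine lt_of_le_of_lt
            (natDegree_sum_le_of_forall_le B _ (n := Q.natDegree - 1) ?_) (by omega)
          intro s hs
          by_cases hcs : c s = 0
          · simp only [hcs, zero_mul, natDegree_zero]
            omega
          · have hs' : s₀ + 1 ≤ s := by
              have := (Finset.mem_filter.1 hs).2
              omega
            have hb := hbound s hcs
            rw [natDegree_mul hcs (pow_ne_zero _ hg0), natDegree_pow]
            have e3 : (s - (s₀ + 1)) * g.natDegree + (s₀ + 1) * g.natDegree
                = s * g.natDegree := by
              rw [← add_mul]
              congr 1
              omega
            have e2 : g.natDegree ≤ (s₀ + 1) * g.natDegree :=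
              Nat.le_mul_of_pos_left _ (by omega)
            have e4 : (c s).natDegree + (s - (s₀ + 1)) * g.natDegree + g.natDegree
                ≤ Q.natDegree := by
              calc (c s).natDegree + (s - (s₀ + 1)) * g.natDegree + g.natDegree
                  ≤ (c s).natDegree + (s - (s₀ + 1)) * g.natDegree
                      + (s₀ + 1) * g.natDegree := add_le_add_right e2 _
                _ = (c s).natDegree + s * g.natDegree := by rw [add_assoc, e3]
                _ ≤ Q.natDegree := hb
            generalize (s - (s₀ + 1)) * g.natDegree = Y at e4 ⊢
            omega
        obtain ⟨EG, hEG1, hEG2⟩ := E1F_bound_small hν hQ hGd hg1 hgD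
        obtain ⟨Ee, hEe1, hEe2⟩ := E1F_bound_small hν hQ hed hg1 hgD
        have hb₁E : E1F ν b₁ (max Ee EG) := by
          rw [hb₁def]
          exact E1F.neg hν
            (E1F.mul hν (hEe2.mono (le_max_left _ _)) (hEG2.mono (le_max_right _ _)))
        have hepsb₁ : eps ν b₁ < eps ν Q :=
          lt_of_le_of_lt (eps_le_of_E1F hν hb₁0 hb₁t hb₁E) (max_lt hEe1 hEG1)
        obtain ⟨hmod_eq, hmod_lt⟩ := Bfull hν hQ hb₁0 hb₁t hepsb₁
        set b₂ := b₁ %ₘ Q with hb₂def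
        have hb₂d : b₂.natDegree < Q.natDegree := natDegree_modByMonic_lt b₁ hQm hQne1
        have hdiff : 0 < ν ((b₁ - b₂) * g) := by
          rw [v_mul hν]
          have hstep : ν b₁ + ν g < ν (b₁ - b₂) + ν g :=
            WithTop.add_lt_add_right hgt hmod_lt
          rw [← v_mul hν, hb₁g0] at hstep
          exact hstep
        have hb₂g1 : 0 < ν (b₂ * g - 1) := by
          rw [show b₂ * g - 1 = (b₁ * g - 1) + (-((b₁ - b₂) * g)) by ring]
          refine lt_of_lt_of_le (lt_min hb₁g1 ?_) (v_min_le hν _ _)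
          rw [v_neg hν]
          exact hdiff
        have hb₂g0 : ν (b₂ * g) = 0 := by
          rw [show b₂ * g = (b₂ * g - 1) + 1 by ring]
          rw [v_add_eq_right hν (by rw [v_one hν]; exact hb₂g1), v_one hν]
        refine ⟨b₂, hb₂d, ?_⟩
        show ν (b₂ * g) < ν (b₂ * g - 1)
        rw [hb₂g0]
        exact hb₂g1
    obtain ⟨b', hb'd, hb'⟩ := hwit
    have hb'g0 : ν (b' * g) = 0 := (vequiv_one hν hb').1
    have hb'0 : b' ≠ 0 := by
      intro h
      rw [h, zero_mul, v_zero hν] at hb'g0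
      simp at hb'g0
    refine ⟨b' * C r.leadingCoeff⁻¹, ?_, ?_⟩
    · rw [natDegree_mul_C (inv_ne_zero hu)]
      exact hb'd
    · have heq2 : b' * C r.leadingCoeff⁻¹ * r = b' * g := by rw [hgdef]; ring
      show ν (b' * C r.leadingCoeff⁻¹ * r) < ν (b' * C r.leadingCoeff⁻¹ * r - 1)
      rw [heq2]
      exact hb'

end UnitSmall
end AuxLemmas
/-- if `Q` is a key polynomial for `ν` and `ε(f) < ε(Q)`, then the initial
term of `f` is a unit: there is `b` with `deg b < deg Q` and `b f ∼_ν 1`. -/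
theorem stmt3 (ν : K[X] → WithTop Λ) (hν : IsValuation ν)
    (Q : K[X]) (hQ : IsKeyPoly ν Q)
    (f : K[X]) (hf : 0 < f.natDegree) (hef : eps ν f < eps ν Q) :
    ∃ b : K[X], b.natDegree < Q.natDegree ∧ VEquiv ν (b * f) 1 := by
  have hft : ν f ≠ ⊤ := v_ne_top_of_eps_lt hef
  obtain ⟨hmod_eq, hmod_lt⟩ := Bfull hν hQ hf hft hef
  set r := f %ₘ Q with hrdef
  have hrt : ν r ≠ ⊤ := by rw [hmod_eq]; exact hft
  have hr0 : r ≠ 0 := fun h => hrt (by rw [h, v_zero hν])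
  have hD := hQ.2.1
  have hQne1 : Q ≠ 1 := fun h1 => by rw [h1] at hD; simp at hD
  have hrd : r.natDegree < Q.natDegree := natDegree_modByMonic_lt f hQ.1 hQne1
  obtain ⟨b, hbd, hb⟩ := unit_small hν hQ r.natDegree r hr0 le_rfl hrd
  obtain ⟨hbr0, hbr1⟩ := vequiv_one hν hb
  have hbt : ν b ≠ ⊤ := by
    intro h
    rw [v_mul hν, h, top_add] at hbr0
    simp at hbr0
  have hdiff : 0 < ν (b * (f - r)) := by
    rw [v_mul hν]
    have hstep : ν b + ν r < ν b + ν (f - r) := by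
      refine WithTop.add_lt_add_left hbt ?_
      rw [hmod_eq]
      exact hmod_lt
    rw [← v_mul hν, hbr0] at hstep
    exact hstep
  refine ⟨b, hbd, ?_⟩
  show ν (b * f) < ν (b * f - 1)
  have h1 : 0 < ν (b * f - 1) := by
    rw [show b * f - 1 = (b * r - 1) + b * (f - r) by ring]
    exact lt_of_lt_of_le (lt_min hbr1 hdiff) (v_min_le hν _ _)
  have h0 : ν (b * f) = 0 := by
    rw [show b * f = (b * f - 1) + 1 by ring]
    rw [v_add_eq_right hν (by rw [v_one hν]; exact h1), v_one hν]
  rw [h0]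
  exact h1

end KeyPolPaper
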